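/- For a finitely supported function v : ℤ^n → ℝ, ∑_{z ∈ ℤ^n} (Δ v(z))² = ∑_{i=1}^{n} ∑_{j=1}^{n} ∑_{z ∈ ℤ^n} (D_i D_{-j} v(z))², where Δ v(z) = ∑_{i=1}^n (v(z+e_i) - 2v(z) + v(z-e_i)) is the discrete Laplacian. -/

import Mathlib

section
variable {G : Type*} [AddCommGroup G]

lemma shift_finsum (f : G → ℝ) (a : G) : ∑ᶠ z, f (z + a) = ∑ᶠ z, f z :=
  finsum_comp_equiv (Equiv.addRight a)

lemma supp_shift {f : G → ℝ} (hf : (Function.support f).Finite) (a : G) :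
    (Function.support fun z => f (z + a)).Finite := by
  have h : (Function.support fun z => f (z + a)) = (fun z => z + a) ⁻¹' Function.support f := rfl
  rw [h]
  exact hf.preimage ((add_left_injective a).injOn)

lemma supp_mul_right {p q : G → ℝ} (hq : (Function.support q).Finite) :
    (Function.support fun z => p z * q z).Finite := by
  refine hq.subset fun z hz => ?_
  simp only [Function.mem_support] at hz ⊢
  exact fun h => hz (by simp [h])

lemma finsum_split (p q r : G → ℝ) (hp : (Function.support p).Finite)
    (hq : (Function.support q).Finite) (hr : (Function.support r).Finite) (c1 c2 c3 : ℝ) :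
    ∑ᶠ z, (c1 * p z + c2 * q z + c3 * r z)
      = c1 * ∑ᶠ z, p z + c2 * ∑ᶠ z, q z + c3 * ∑ᶠ z, r z := by
  have hp' : (Function.support fun z => c1 * p z).Finite := supp_mul_right hp
  have hq' : (Function.support fun z => c2 * q z).Finite := supp_mul_right hq
  have hr' : (Function.support fun z => c3 * r z).Finite := supp_mul_right hr
  rw [finsum_add_distrib ((hp'.union hq').subset (Function.support_add _ _)) hr',
    finsum_add_distrib hp' hq', mul_finsum _ _, mul_finsum _ _, mul_finsum _ _]

lemma pair (v : G → ℝ) (hv : (Function.support v).Finite) (e f : G) :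
    ∑ᶠ z, (v (z + e) - 2 * v z + v (z - e)) * (v (z + f) - 2 * v z + v (z - f))
      = ∑ᶠ z, ((v (z + e) - v (z + e - f)) - (v z - v (z - f))) ^ 2 := by
  set w : G → ℝ := fun z => v z - v (z - f) with hw_def
  have hw : (Function.support w).Finite := by
    have h2 : (Function.support fun z => v (z - f)).Finite := by
      simpa [sub_eq_add_neg] using supp_shift hv (-f)
    exact (hv.union h2).subset fun z hz => by
      simp only [Function.mem_support, hw_def, Set.mem_union] at hz ⊢
      by_contra hc
      push_neg at hc
      exact hz (by rw [hc.1, hc.2, sub_self])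
  have hwe : (Function.support fun z => w (z + e)).Finite := supp_shift hw e
  -- rewrite RHS in terms of w
  have hR : ∀ z, ((v (z + e) - v (z + e - f)) - (v z - v (z - f))) ^ 2
      = (w (z + e) - w z) ^ 2 := fun z => rfl
  -- rewrite LHS in terms of w
  set A : G → ℝ := fun z => v (z + e) - 2 * v z + v (z - e) with hA_def
  have hL : ∀ z, (v (z + f) - 2 * v z + v (z - f)) = w (z + f) - w z := by
    intro z
    simp only [hw_def, add_sub_cancel_right]
    ring
  simp only [hR, hL]
  -- LHS split
  have key : ∀ z, A z * (w (z + f) - w z)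
      = (A z * w (z + f)) - (A z * w z) := fun z => mul_sub _ _ _
  have hAwf : (Function.support fun z => A z * w (z + f)).Finite := supp_mul_right (supp_shift hw f)
  have hAw : (Function.support fun z => A z * w z).Finite := supp_mul_right hw
  calc ∑ᶠ z, A z * (w (z + f) - w z)
      = (∑ᶠ z, A z * w (z + f)) - ∑ᶠ z, A z * w z := by
        simp only [key]; exact finsum_sub_distrib hAwf hAw
    _ = (∑ᶠ z, A (z - f) * w z) - ∑ᶠ z, A z * w z := by
        congr 1
        rw [← shift_finsum (fun z => A z * w (z + f)) (-f)]
        apply finsum_congr; intro z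
        simp [← sub_eq_add_neg]
    _ = ∑ᶠ z, (A (z - f) - A z) * w z := by
        rw [← finsum_sub_distrib (supp_mul_right hw) hAw]
        apply finsum_congr; intro z; ring
    _ = ∑ᶠ z, (2 * (w z * w z) + (-1) * (w (z + e) * w z) + (-1) * (w (z - e) * w z)) := by
        apply finsum_congr; intro z
        have h1 : z - f + e = z + e - f := by abel
        have h2 : z - f - e = z - e - f := by abel
        simp only [hA_def, hw_def, h1, h2, add_sub_cancel_right]
        ring
    _ = 2 * (∑ᶠ z, w z * w z) + (-1) * (∑ᶠ z, w (z + e) * w z)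
          + (-1) * (∑ᶠ z, w (z - e) * w z) :=
        finsum_split _ _ _ (supp_mul_right hw) (supp_mul_right hw) (supp_mul_right hw) _ _ _
    _ = 2 * (∑ᶠ z, w z * w z) + (-2) * (∑ᶠ z, w (z + e) * w z) := by
        have : ∑ᶠ z, w (z - e) * w z = ∑ᶠ z, w (z + e) * w z := by
          rw [← shift_finsum (fun z => w (z - e) * w z) e]
          apply finsum_congr; intro z
          rw [add_sub_cancel_right, mul_comm]
        rw [this]; ring
    _ = ∑ᶠ z, (w (z + e) - w z) ^ 2 := by
        have h1 : ∑ᶠ z, w (z + e) * w (z + e) = ∑ᶠ z, w z * w z :=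
          shift_finsum (fun z => w z * w z) e
        rw [show (∑ᶠ z, (w (z + e) - w z) ^ 2)
            = ∑ᶠ z, (1 * (w (z + e) * w (z + e)) + (-2) * (w (z + e) * w z)
              + 1 * (w z * w z)) from finsum_congr fun z => by ring,
          finsum_split _ _ _ (supp_mul_right (supp_shift hw e)) (supp_mul_right hw)
            (supp_mul_right hw), h1]
        ring

lemma suppA (v : G → ℝ) (hv : (Function.support v).Finite) (e : G) :
    (Function.support fun z => v (z + e) - 2 * v z + v (z - e)).Finite := by
  have h1 := supp_shift hv e
  have h2 := supp_shift hv (-e)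
  refine ((h1.union hv).union h2).subset fun z hz => ?_
  simp only [Function.mem_support, Set.mem_union] at hz ⊢
  by_contra hc
  push_neg at hc
  obtain ⟨⟨ha, hb⟩, hcc⟩ := hc
  exact hz (by rw [sub_eq_add_neg z e] at hz ⊢; rw [ha, hb, hcc]; ring)

end

/-- The L² norm of the discrete Laplacian equals the L² norm of the discrete Hessian. -/
theorem stmt2 (n : ℕ) (v : (Fin n → ℤ) → ℝ) (hv : (Function.support v).Finite) :
    ∑ᶠ z : Fin n → ℤ,
        (∑ i : Fin n, (v (z + Pi.single i 1) - 2 * v z + v (z - Pi.single i 1))) ^ 2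
      = ∑ i : Fin n, ∑ j : Fin n, ∑ᶠ z : Fin n → ℤ,
          ((v (z + Pi.single i 1) - v (z + Pi.single i 1 - Pi.single j 1))
            - (v z - v (z - Pi.single j 1))) ^ 2 := by
  set a : Fin n → (Fin n → ℤ) → ℝ :=
    fun i z => v (z + Pi.single i 1) - 2 * v z + v (z - Pi.single i 1) with ha
  have hA : ∀ i, (Function.support (a i)).Finite := fun i => suppA v hv _
  have step1 : ∀ z, (∑ i : Fin n, a i z) ^ 2 = ∑ i : Fin n, ∑ j : Fin n, a i z * a j z := by
    intro z
    rw [sq, Finset.sum_mul_sum]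
  calc ∑ᶠ z, (∑ i : Fin n, a i z) ^ 2
      = ∑ᶠ z, ∑ i : Fin n, ∑ j : Fin n, a i z * a j z := finsum_congr step1
    _ = ∑ i : Fin n, ∑ᶠ z, ∑ j : Fin n, a i z * a j z := by
        apply finsum_sum_comm
        intro i _
        refine (hA i).subset fun z hz => ?_
        simp only [Function.mem_support] at hz ⊢
        exact fun h => hz (by simp [h])
    _ = ∑ i : Fin n, ∑ j : Fin n, ∑ᶠ z, a i z * a j z := by
        refine Finset.sum_congr rfl fun i _ => ?_
        apply finsum_sum_comm
        intro j _
        exact supp_mul_right (hA j)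
    _ = _ := by
        refine Finset.sum_congr rfl fun i _ => Finset.sum_congr rfl fun j _ => ?_
        exact pair v hv (Pi.single i 1) (Pi.single j 1)
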